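/- In the two-class two-queue M/M/1 example, U is constant on the line segment L_1 = {(p_1, p_2) ∈ [0,1]² : γ_1 = γ_2}, taking the value (λ_1 β_1 + λ_2 β_2) D((λ_1 + λ_2)/2), and along L_1 the partial derivative ∂U/∂p_1 equals λ_1 D'((λ_1+λ_2)/2) ((2p_1 − 1) β_1 λ_1 + (2p_2 − 1) β_2 λ_2). In particular, since β_1 ≠ β_2, this partial derivative is nonzero at some point of L_1, so U does not attain its minimum at every point of L_1. -/

import Mathlib

/-- `U` is constant on the balanced-flow segment `L₁`, the partial
derivative `∂U/∂p₁` on `L₁` equals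
`λ₁ D'((λ₁+λ₂)/2) ((2p₁−1)β₁λ₁ + (2p₂−1)β₂λ₂)`, and this derivative is nonzero
at some point of `L₁`, so `U` does not attain its minimum at every point of `L₁`. -/
theorem social_cost_on_balanced_segment
    (lam1 lam2 beta1 beta2 : ℝ)
    (hlam1 : 0 < lam1) (hlam2 : 0 < lam2) (hstab : lam1 + lam2 < 1)
    (hbeta : beta1 > beta2) (hbeta2 : beta2 > 0)
    (D : ℝ → ℝ) (hD : ∀ g, D g = 1 / (1 - g))
    (U : ℝ → ℝ → ℝ)
    (hU : ∀ p1 p2 : ℝ,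
      U p1 p2 = (p1 * lam1 * beta1 + p2 * lam2 * beta2) *
              (D (lam1 * p1 + lam2 * p2) -
               D (lam1 * (1 - p1) + lam2 * (1 - p2))) +
            (lam1 * beta1 + lam2 * beta2) *
              D (lam1 * (1 - p1) + lam2 * (1 - p2))) :
    -- U is constant on L₁
    (∀ p1 p2 : ℝ, p1 ∈ Set.Icc (0:ℝ) 1 → p2 ∈ Set.Icc (0:ℝ) 1 →
      lam1 * p1 + lam2 * p2 = lam1 * (1 - p1) + lam2 * (1 - p2) →
      U p1 p2 = (lam1 * beta1 + lam2 * beta2) * D ((lam1 + lam2) / 2)) ∧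
    -- formula for ∂U/∂p₁ on L₁
    (∀ p1 p2 : ℝ,
      lam1 * p1 + lam2 * p2 = lam1 * (1 - p1) + lam2 * (1 - p2) →
      HasDerivAt (fun x => U x p2)
        (lam1 * deriv D ((lam1 + lam2) / 2) *
          ((2 * p1 - 1) * beta1 * lam1 + (2 * p2 - 1) * beta2 * lam2)) p1) ∧
    -- the derivative is nonzero somewhere on L₁ ∩ [0,1]²
    (∃ p1 p2 : ℝ, p1 ∈ Set.Icc (0:ℝ) 1 ∧ p2 ∈ Set.Icc (0:ℝ) 1 ∧
      lam1 * p1 + lam2 * p2 = lam1 * (1 - p1) + lam2 * (1 - p2) ∧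
      lam1 * deriv D ((lam1 + lam2) / 2) *
        ((2 * p1 - 1) * beta1 * lam1 + (2 * p2 - 1) * beta2 * lam2) ≠ 0) ∧
    -- hence U does not attain its global minimum over [0,1]² at every point of L₁
    ¬(∀ p1 p2 : ℝ, p1 ∈ Set.Icc (0:ℝ) 1 → p2 ∈ Set.Icc (0:ℝ) 1 →
      lam1 * p1 + lam2 * p2 = lam1 * (1 - p1) + lam2 * (1 - p2) →
      ∀ q1 q2 : ℝ, q1 ∈ Set.Icc (0:ℝ) 1 → q2 ∈ Set.Icc (0:ℝ) 1 →
        U p1 p2 ≤ U q1 q2) := by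
  have hlam1' : lam1 ≠ 0 := ne_of_gt hlam1
  have hlam2' : lam2 ≠ 0 := ne_of_gt hlam2
  set s : ℝ := (lam1 + lam2) / 2 with hs
  have hs0 : 0 < 1 - s := by
    have : s < 1 / 2 := by rw [hs]; linarith
    linarith
  have hs1 : (1 : ℝ) - s ≠ 0 := ne_of_gt hs0
  have hDfun : D = fun g => 1 / (1 - g) := funext hD
  have hDd : HasDerivAt D (1 / (1 - s) ^ 2) s := by
    rw [hDfun]
    simp only [one_div]
    have h1 : HasDerivAt (fun g : ℝ => 1 - g) (-1) s := by
      simpa using (hasDerivAt_id s).const_sub 1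
    have := h1.inv hs1
    refine this.congr_deriv ?_
    field_simp
  have hderivD : deriv D s = 1 / (1 - s) ^ 2 := hDd.deriv
  -- derivative formula (part 2)
  have key : ∀ p1 p2 : ℝ,
      lam1 * p1 + lam2 * p2 = lam1 * (1 - p1) + lam2 * (1 - p2) →
      HasDerivAt (fun x => U x p2)
        (lam1 * deriv D ((lam1 + lam2) / 2) *
          ((2 * p1 - 1) * beta1 * lam1 + (2 * p2 - 1) * beta2 * lam2)) p1 := by
    intro p1 p2 hL
    have hg1 : lam1 * p1 + lam2 * p2 = s := by rw [hs]; linarith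
    have hg2 : lam1 * (1 - p1) + lam2 * (1 - p2) = s := by rw [hs]; linarith
    have hfun : (fun x => U x p2) = fun x =>
        (x * lam1 * beta1 + p2 * lam2 * beta2) *
          ((1 - (lam1 * x + lam2 * p2))⁻¹ - (1 - (lam1 * (1 - x) + lam2 * (1 - p2)))⁻¹)
        + (lam1 * beta1 + lam2 * beta2) * (1 - (lam1 * (1 - x) + lam2 * (1 - p2)))⁻¹ := by
      funext x
      rw [hU, hD, hD]
      ring
    rw [hfun]
    have hne1 : 1 - (lam1 * p1 + lam2 * p2) ≠ 0 := by rw [hg1]; exact hs1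
    have hne2 : 1 - (lam1 * (1 - p1) + lam2 * (1 - p2)) ≠ 0 := by rw [hg2]; exact hs1
    have hA : HasDerivAt (fun x : ℝ => x * lam1 * beta1 + p2 * lam2 * beta2)
        (lam1 * beta1) p1 := by
      simpa [mul_assoc] using
        ((hasDerivAt_id p1).mul_const (lam1 * beta1)).add_const (p2 * lam2 * beta2)
    have hin1 : HasDerivAt (fun x : ℝ => 1 - (lam1 * x + lam2 * p2)) (-lam1) p1 := by
      simpa using (((hasDerivAt_id p1).const_mul lam1).add_const (lam2 * p2)).const_sub 1
    have hin2 : HasDerivAt (fun x : ℝ => 1 - (lam1 * (1 - x) + lam2 * (1 - p2))) lam1 p1 := by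
      simpa using ((((hasDerivAt_id p1).const_sub 1).const_mul lam1).add_const
        (lam2 * (1 - p2))).const_sub 1
    have hI1 := hin1.inv hne1
    have hI2 := hin2.inv hne2
    have hfull := (hA.mul (hI1.sub hI2)).add (hI2.const_mul (lam1 * beta1 + lam2 * beta2))
    refine hfull.congr_deriv ?_
    simp only [Pi.sub_apply, Pi.inv_apply]
    rw [hderivD, hg1, hg2]
    field_simp
    ring
  -- the witness point
  set c : ℝ := min (1/4) (lam2 / (2 * lam1)) with hc
  have hc0 : 0 < c := lt_min (by norm_num) (by positivity)
  have hc4 : c ≤ 1/4 := min_le_left _ _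
  have hclam : c * lam1 ≤ lam2 / 2 := by
    have h := min_le_right (1/4) (lam2 / (2 * lam1))
    have h2 : lam2 / (2 * lam1) * lam1 = lam2 / 2 := by field_simp
    nlinarith [h, hlam1]
  have ht0 : 0 ≤ c * lam1 / lam2 := by positivity
  have ht2 : c * lam1 / lam2 ≤ 1/2 := by
    rw [div_le_iff₀ hlam2]; linarith
  have hq1mem : (1/2 + c) ∈ Set.Icc (0:ℝ) 1 := by
    rw [Set.mem_Icc]; constructor <;> linarith
  have hq2mem : (1/2 - c * lam1 / lam2) ∈ Set.Icc (0:ℝ) 1 := by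
    rw [Set.mem_Icc]; constructor <;> linarith
  have hqL : lam1 * (1/2 + c) + lam2 * (1/2 - c * lam1 / lam2)
      = lam1 * (1 - (1/2 + c)) + lam2 * (1 - (1/2 - c * lam1 / lam2)) := by
    field_simp
    ring
  have hqne : lam1 * deriv D ((lam1 + lam2) / 2) *
      ((2 * (1/2 + c) - 1) * beta1 * lam1 + (2 * (1/2 - c * lam1 / lam2) - 1) * beta2 * lam2) ≠ 0 := by
    have hfac : (2 * (1/2 + c) - 1) * beta1 * lam1 + (2 * (1/2 - c * lam1 / lam2) - 1) * beta2 * lam2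
        = 2 * c * lam1 * (beta1 - beta2) := by
      field_simp; ring
    have hsconv : (lam1 + lam2) / 2 = s := hs.symm
    rw [hfac, hsconv, hderivD]
    refine mul_ne_zero (mul_ne_zero hlam1' ?_) ?_
    · exact one_div_ne_zero (pow_ne_zero 2 hs1)
    · apply ne_of_gt
      have hb : 0 < beta1 - beta2 := by linarith
      positivity
  refine ⟨?_, key, ⟨1/2 + c, 1/2 - c * lam1 / lam2, hq1mem, hq2mem, hqL, hqne⟩, ?_⟩
  · intro p1 p2 _ _ hL
    have hg1 : lam1 * p1 + lam2 * p2 = s := by rw [hs]; linarith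
    have hg2 : lam1 * (1 - p1) + lam2 * (1 - p2) = s := by rw [hs]; linarith
    rw [hU, hg1, hg2]
    ring
  · intro hall
    have hmin := hall (1/2 + c) (1/2 - c * lam1 / lam2) hq1mem hq2mem hqL
    have hd := key (1/2 + c) (1/2 - c * lam1 / lam2) hqL
    have h0 : (0:ℝ) < 1/2 + c := by linarith
    have h1 : (1/2 + c : ℝ) < 1 := by linarith
    have hloc : IsLocalMin (fun x => U x (1/2 - c * lam1 / lam2)) (1/2 + c) := by
      have hmem : Set.Icc (0:ℝ) 1 ∈ nhds (1/2 + c) := Icc_mem_nhds h0 h1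
      exact Filter.eventually_of_mem hmem
        (fun x hx => hmin x (1/2 - c * lam1 / lam2) hx hq2mem)
    exact hqne (hloc.hasDerivAt_eq_zero hd)
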